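/- Let S be a balanced rooted binary phylogenetic tree on 2^(h1) leaves and T a balanced rooted binary phylogenetic tree on 2^(h2) leaves (h1, h2 nonnegative integers), and suppose their label sets intersect in exactly t leaves with t > 0. Then mast(S, T) ≥ 2^(0.22·log₂ t − 0.025·(h1 + h2)). -/

import Mathlib

/-!
Rooted binary phylogenetic trees, restrictions, agreement subtrees, and
maximum agreement subtrees (MASTs), following Martin–Thatte style definitions.
-/

namespace PhyloMAST

/-- A rooted binary tree with leaves labelled by `α`. -/
inductive PTree (α : Type) : Type
  | leaf : α → PTree α
  | node : PTree α → PTree α → PTree α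

namespace PTree

variable {α β : Type}

/-- The list of leaf labels, read left to right. -/
def leafList : PTree α → List α
  | leaf x => [x]
  | node l r => leafList l ++ leafList r

/-- The set of leaf labels. -/
def leaves [DecidableEq α] (t : PTree α) : Finset α := t.leafList.toFinset

/-- The height: number of edges on a longest root-to-leaf path. -/
def height : PTree α → ℕ
  | leaf _ => 0
  | node l r => max (height l) (height r) + 1

/-- `t` is a genuine phylogenetic tree: its leaf labels are pairwise distinct. -/
def Phylo (t : PTree α) : Prop := t.leafList.Nodup

/-- `t` is balanced: its number of leaves is `2 ^ height`. -/
def Balanced (t : PTree α) : Prop := t.leafList.length = 2 ^ t.height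

/-- The restriction `t|Y`: the minimal subtree connecting the leaves in `Y`
with all non-root degree-two vertices suppressed; `none` if no leaf of `t`
lies in `Y`. -/
def restrict [DecidableEq α] : PTree α → Finset α → Option (PTree α)
  | leaf x, Y => if x ∈ Y then some (leaf x) else none
  | node l r, Y =>
    match restrict l Y, restrict r Y with
    | some l', some r' => some (node l' r')
    | some l', none => some l'
    | none, some r' => some r'
    | none, none => none

/-- Isomorphism of leaf-labelled rooted binary trees (children are unordered). -/
inductive Iso : PTree α → PTree α → Prop
  | leaf (x : α) : Iso (leaf x) (leaf x)
  | node {a b c d : PTree α} : Iso a c → Iso b d → Iso (node a b) (node c d)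
  | swap {a b c d : PTree α} : Iso a d → Iso b c → Iso (node a b) (node c d)

/-- `Agree S T Y`: the set `Y` induces an agreement subtree of `S` and `T`. -/
def Agree [DecidableEq α] (S T : PTree α) (Y : Finset α) : Prop :=
  Y ⊆ S.leaves ∩ T.leaves ∧
    ∃ S' T', S.restrict Y = some S' ∧ T.restrict Y = some T' ∧ Iso S' T'

/-- `mast S T`: the maximum size of an agreement subtree of `S` and `T`. -/
noncomputable def mast [DecidableEq α] (S T : PTree α) : ℕ :=
  sSup {k | ∃ Y : Finset α, Agree S T Y ∧ Y.card = k}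

/-- The caterpillar tree `(l₁, l₂, …, lₙ)` built from a (nonempty) list:
`l₁` and `l₂` share a parent, and each later leaf hangs off the path to the
root, which is adjacent to the last leaf. -/
def catList [Inhabited α] : List α → PTree α
  | [] => leaf default
  | x :: xs => xs.foldl (fun t y => node t (leaf y)) (leaf x)

/-- `T` embeds the phylogenetic tree `T'`: the label set of `T'` is contained
in that of `T`, and the restriction of `T` to it is isomorphic to `T'`. -/
def Embeds [DecidableEq α] (T T' : PTree α) : Prop :=
  T'.leaves ⊆ T.leaves ∧ ∃ R, T.restrict T'.leaves = some R ∧ Iso R T'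

/-- `Subtree s t`: `s` is a (pendant) subtree of `t` (possibly `t` itself). -/
inductive Subtree : PTree α → PTree α → Prop
  | refl (t : PTree α) : Subtree t t
  | left {s l r : PTree α} : Subtree s l → Subtree s (node l r)
  | right {s l r : PTree α} : Subtree s r → Subtree s (node l r)

/-- The pendant subtrees rooted at depth `k`, read left to right. -/
def subtreesAt : ℕ → PTree α → List (PTree α)
  | 0, t => [t]
  | _ + 1, leaf x => [leaf x]
  | k + 1, node l r => subtreesAt k l ++ subtreesAt k r

/-- Two trees have the same unlabelled shape (a labelling of the second
yields the first). -/
inductive SameShape : PTree α → PTree β → Prop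
  | leaf (x : α) (y : β) : SameShape (leaf x) (leaf y)
  | node {a b : PTree α} {c d : PTree β} :
      SameShape a c → SameShape b d → SameShape (node a b) (node c d)

end PTree

end PhyloMAST

section Aux

namespace PhyloMAST.PTree

set_option linter.unusedSectionVars false

variable {α : Type} [DecidableEq α]

lemma mem_leaves' {t : PTree α} {x : α} : x ∈ t.leaves ↔ x ∈ t.leafList :=
  List.mem_toFinset

lemma phylo_node' {l r : PTree α} (h : Phylo (node l r)) :
    Phylo l ∧ Phylo r ∧ l.leafList.Disjoint r.leafList := by
  have h' : (l.leafList ++ r.leafList).Nodup := h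
  rw [List.nodup_append] at h'
  exact ⟨h'.1, h'.2.1, by intro a ha hb; exact h'.2.2 a ha a hb rfl⟩

lemma leaves_disjoint {l r : PTree α} (h : Phylo (node l r)) :
    Disjoint l.leaves r.leaves :=
  List.disjoint_toFinset_iff_disjoint.mpr (phylo_node' h).2.2

lemma card_leaves {t : PTree α} (h : Phylo t) : t.leaves.card = t.leafList.length :=
  List.toFinset_card_of_nodup h

lemma length_le_two_pow (t : PTree α) : t.leafList.length ≤ 2 ^ t.height := by
  induction t with
  | leaf x => simp [leafList, height]
  | node l r ihl ihr =>
    have h1 : 2 ^ l.height ≤ 2 ^ (max l.height r.height) :=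
      Nat.pow_le_pow_right (by norm_num) (le_max_left _ _)
    have h2 : 2 ^ r.height ≤ 2 ^ (max l.height r.height) :=
      Nat.pow_le_pow_right (by norm_num) (le_max_right _ _)
    have : (node l r).leafList.length = l.leafList.length + r.leafList.length := by
      simp [leafList]
    rw [this, show (node l r).height = max l.height r.height + 1 from rfl, pow_succ]
    omega

lemma length_pos (t : PTree α) : 0 < t.leafList.length := by
  induction t with
  | leaf x => simp [leafList]
  | node l r ihl ihr => simp [leafList]; omega

lemma balanced_node {l r : PTree α} (h : Balanced (node l r)) :
    Balanced l ∧ Balanced r ∧ l.height = r.height ∧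
      (node l r).height = l.height + 1 := by
  have hl := length_le_two_pow l
  have hr := length_le_two_pow r
  set m := max l.height r.height with hm
  have h1 : 2 ^ l.height ≤ 2 ^ m := Nat.pow_le_pow_right (by norm_num) (le_max_left _ _)
  have h2 : 2 ^ r.height ≤ 2 ^ m := Nat.pow_le_pow_right (by norm_num) (le_max_right _ _)
  have hsum : l.leafList.length + r.leafList.length = 2 ^ m + 2 ^ m := by
    have h' : (l.leafList ++ r.leafList).length = 2 ^ (m + 1) := h
    rw [List.length_append] at h'
    rw [h', pow_succ]; ring
  have hle : l.leafList.length ≤ 2 ^ m := le_trans hl h1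
  have hre : r.leafList.length ≤ 2 ^ m := le_trans hr h2
  have hleq : l.leafList.length = 2 ^ m := by omega
  have hreq : r.leafList.length = 2 ^ m := by omega
  have hml : m ≤ l.height := by
    have : 2 ^ m ≤ 2 ^ l.height := hleq ▸ hl
    exact (Nat.pow_le_pow_iff_right (by norm_num)).mp this
  have hmr : m ≤ r.height := by
    have : 2 ^ m ≤ 2 ^ r.height := hreq ▸ hr
    exact (Nat.pow_le_pow_iff_right (by norm_num)).mp this
  have hlm : l.height = m := le_antisymm (le_max_left _ _) hml
  have hrm : r.height = m := le_antisymm (le_max_right _ _) hmr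
  refine ⟨?_, ?_, by omega, ?_⟩
  · show l.leafList.length = 2 ^ l.height; rw [hleq, hlm]
  · show r.leafList.length = 2 ^ r.height; rw [hreq, hrm]
  · show m + 1 = l.height + 1; omega

lemma restrict_node (l r : PTree α) (Y : Finset α) :
    (node l r).restrict Y =
      match l.restrict Y, r.restrict Y with
      | some l', some r' => some (node l' r')
      | some l', none => some l'
      | none, some r' => some r'
      | none, none => none := rfl

lemma restrict_eq_none_iff (t : PTree α) (Y : Finset α) :
    t.restrict Y = none ↔ ∀ x ∈ t.leafList, x ∉ Y := by
  induction t with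
  | leaf x =>
    by_cases h : x ∈ Y <;> simp [restrict, leafList, h]
  | node l r ihl ihr =>
    rw [restrict_node]
    constructor
    · intro h x hx hxY
      cases hl : l.restrict Y <;> cases hr : r.restrict Y <;>
        rw [hl, hr] at h <;> try simp at h
      have hx' : x ∈ l.leafList ∨ x ∈ r.leafList := by simpa [leafList] using hx
      rcases hx' with h' | h'
      · exact (ihl.mp hl) x h' hxY
      · exact (ihr.mp hr) x h' hxY
    · intro h
      have hl : l.restrict Y = none := ihl.mpr (fun x hx => h x (by simp [leafList, hx]))
      have hr : r.restrict Y = none := ihr.mpr (fun x hx => h x (by simp [leafList, hx]))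
      rw [hl, hr]

lemma restrict_congr (t : PTree α) {Y Z : Finset α}
    (h : ∀ x ∈ t.leafList, (x ∈ Y ↔ x ∈ Z)) : t.restrict Y = t.restrict Z := by
  induction t with
  | leaf x =>
    have := h x (by simp [leafList])
    simp only [restrict]
    rw [if_congr this rfl rfl]
  | node l r ihl ihr =>
    rw [restrict_node, restrict_node,
      ihl (fun x hx => h x (by simp [leafList, hx])),
      ihr (fun x hx => h x (by simp [leafList, hx]))]

lemma restrict_singleton {t : PTree α} (ht : Phylo t) {x : α} (hx : x ∈ t.leafList) :
    t.restrict {x} = some (leaf x) := by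
  induction t with
  | leaf y =>
    simp only [leafList, List.mem_singleton] at hx
    subst hx
    simp [restrict]
  | node l r ihl ihr =>
    obtain ⟨hpl, hpr, hdisj⟩ := phylo_node' ht
    have hx' : x ∈ l.leafList ∨ x ∈ r.leafList := by
      simpa [leafList] using hx
    rcases hx' with hxl | hxr
    · have hrn : r.restrict {x} = none := by
        rw [restrict_eq_none_iff]
        intro y hy hyx
        rw [Finset.mem_singleton] at hyx
        exact hdisj hxl (hyx ▸ hy)
      rw [restrict_node, ihl hpl hxl, hrn]
    · have hln : l.restrict {x} = none := by
        rw [restrict_eq_none_iff]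
        intro y hy hyx
        rw [Finset.mem_singleton] at hyx
        exact hdisj (hyx ▸ hy) hxr
      rw [restrict_node, hln, ihr hpr hxr]

/-! ### mast basics -/

lemma bddAbove_mastSet (S T : PTree α) :
    BddAbove {k | ∃ Y : Finset α, Agree S T Y ∧ Y.card = k} := by
  refine ⟨S.leaves.card, ?_⟩
  rintro k ⟨Y, ⟨hsub, _⟩, rfl⟩
  exact Finset.card_le_card (hsub.trans Finset.inter_subset_left)

lemma card_le_mast {S T : PTree α} {Y : Finset α} (h : Agree S T Y) :
    Y.card ≤ mast S T :=
  le_csSup (bddAbove_mastSet S T) ⟨Y, h, rfl⟩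

lemma exists_mast_witness {S T : PTree α} (h : ∃ Y, Agree S T Y) :
    ∃ Y, Agree S T Y ∧ Y.card = mast S T := by
  obtain ⟨Y0, hY0⟩ := h
  have hne : {k | ∃ Y : Finset α, Agree S T Y ∧ Y.card = k}.Nonempty :=
    ⟨Y0.card, Y0, hY0, rfl⟩
  obtain ⟨Y, hY, hc⟩ := Nat.sSup_mem hne (bddAbove_mastSet S T)
  exact ⟨Y, hY, hc⟩

lemma agree_singleton {S T : PTree α} (hS : Phylo S) (hT : Phylo T) {x : α}
    (hx : x ∈ S.leaves ∩ T.leaves) : Agree S T ({x} : Finset α) := by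
  refine ⟨by simpa using hx, leaf x, leaf x, ?_, ?_, Iso.leaf x⟩
  · exact restrict_singleton hS (mem_leaves'.mp (Finset.mem_inter.mp hx).1)
  · exact restrict_singleton hT (mem_leaves'.mp (Finset.mem_inter.mp hx).2)

lemma one_le_mast {S T : PTree α} (hS : Phylo S) (hT : Phylo T)
    (h : 0 < (S.leaves ∩ T.leaves).card) : 1 ≤ mast S T := by
  obtain ⟨x, hx⟩ := Finset.card_pos.mp h
  have := card_le_mast (agree_singleton hS hT hx)
  simpa using this

lemma mast_le_of_agree_imp {S T S' T' : PTree α}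
    (h : ∀ Y, Agree S T Y → Agree S' T' Y) : mast S T ≤ mast S' T' := by
  by_cases hne : {k | ∃ Y : Finset α, Agree S T Y ∧ Y.card = k}.Nonempty
  · apply csSup_le hne
    rintro k ⟨Y, hY, rfl⟩
    exact card_le_mast (h Y hY)
  · rw [mast, Set.not_nonempty_iff_eq_empty.mp hne, csSup_empty]
    exact Nat.zero_le _

/-! ### structural agreement lemmas -/

lemma agree_node_left {S1 S2 T : PTree α} (hS : Phylo (node S1 S2)) {Y : Finset α}
    (h : Agree S1 T Y) : Agree (node S1 S2) T Y := by
  obtain ⟨hsub, S', T', hs, ht, hiso⟩ := h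
  obtain ⟨_, _, hdisj⟩ := phylo_node' hS
  have hY1 : Y ⊆ S1.leaves := hsub.trans Finset.inter_subset_left
  have hnone : S2.restrict Y = none := by
    rw [restrict_eq_none_iff]
    intro x hx hxY
    exact hdisj (mem_leaves'.mp (hY1 hxY)) hx
  refine ⟨?_, S', T', ?_, ht, hiso⟩
  · intro y hy
    have := hsub hy
    rw [Finset.mem_inter] at this ⊢
    refine ⟨?_, this.2⟩
    have : y ∈ S1.leaves := this.1
    rw [mem_leaves'] at this ⊢
    simp [leafList, this]
  · rw [restrict_node, hs, hnone]

lemma agree_node_right {S1 S2 T : PTree α} (hS : Phylo (node S1 S2)) {Y : Finset α}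
    (h : Agree S2 T Y) : Agree (node S1 S2) T Y := by
  obtain ⟨hsub, S', T', hs, ht, hiso⟩ := h
  obtain ⟨_, _, hdisj⟩ := phylo_node' hS
  have hY1 : Y ⊆ S2.leaves := hsub.trans Finset.inter_subset_left
  have hnone : S1.restrict Y = none := by
    rw [restrict_eq_none_iff]
    intro x hx hxY
    exact hdisj hx (mem_leaves'.mp (hY1 hxY))
  refine ⟨?_, S', T', ?_, ht, hiso⟩
  · intro y hy
    have := hsub hy
    rw [Finset.mem_inter] at this ⊢
    refine ⟨?_, this.2⟩
    have : y ∈ S2.leaves := this.1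
    rw [mem_leaves'] at this ⊢
    simp [leafList, this]
  · rw [restrict_node, hs, hnone]

lemma agree_tnode_left {S T1 T2 : PTree α} (hT : Phylo (node T1 T2)) {Y : Finset α}
    (h : Agree S T1 Y) : Agree S (node T1 T2) Y := by
  obtain ⟨hsub, S', T', hs, ht, hiso⟩ := h
  obtain ⟨_, _, hdisj⟩ := phylo_node' hT
  have hY1 : Y ⊆ T1.leaves := hsub.trans Finset.inter_subset_right
  have hnone : T2.restrict Y = none := by
    rw [restrict_eq_none_iff]
    intro x hx hxY
    exact hdisj (mem_leaves'.mp (hY1 hxY)) hx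
  refine ⟨?_, S', T', hs, ?_, hiso⟩
  · intro y hy
    have := hsub hy
    rw [Finset.mem_inter] at this ⊢
    refine ⟨this.1, ?_⟩
    have : y ∈ T1.leaves := this.2
    rw [mem_leaves'] at this ⊢
    simp [leafList, this]
  · rw [restrict_node, ht, hnone]

lemma agree_tnode_right {S T1 T2 : PTree α} (hT : Phylo (node T1 T2)) {Y : Finset α}
    (h : Agree S T2 Y) : Agree S (node T1 T2) Y := by
  obtain ⟨hsub, S', T', hs, ht, hiso⟩ := h
  obtain ⟨_, _, hdisj⟩ := phylo_node' hT
  have hY1 : Y ⊆ T2.leaves := hsub.trans Finset.inter_subset_right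
  have hnone : T1.restrict Y = none := by
    rw [restrict_eq_none_iff]
    intro x hx hxY
    exact hdisj hx (mem_leaves'.mp (hY1 hxY))
  refine ⟨?_, S', T', hs, ?_, hiso⟩
  · intro y hy
    have := hsub hy
    rw [Finset.mem_inter] at this ⊢
    refine ⟨this.1, ?_⟩
    have : y ∈ T2.leaves := this.2
    rw [mem_leaves'] at this ⊢
    simp [leafList, this]
  · rw [restrict_node, ht, hnone]

/-- restriction to a union where the second part misses the tree entirely -/
lemma restrict_union_right_irrel {t : PTree α} {Y Z : Finset α}
    (h : ∀ x ∈ t.leafList, x ∉ Z) : t.restrict (Y ∪ Z) = t.restrict Y := by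
  apply restrict_congr
  intro x hx
  simp only [Finset.mem_union]
  have := h x hx
  tauto

lemma restrict_union_left_irrel {t : PTree α} {Y Z : Finset α}
    (h : ∀ x ∈ t.leafList, x ∉ Y) : t.restrict (Y ∪ Z) = t.restrict Z := by
  apply restrict_congr
  intro x hx
  simp only [Finset.mem_union]
  have := h x hx
  tauto

lemma agree_union {S1 S2 T1 T2 : PTree α} (hS : Phylo (node S1 S2))
    (hT : Phylo (node T1 T2)) {Y1 Y2 : Finset α}
    (h1 : Agree S1 T1 Y1) (h2 : Agree S2 T2 Y2) :
    Agree (node S1 S2) (node T1 T2) (Y1 ∪ Y2) := by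
  obtain ⟨hsub1, S1', T1', hs1, ht1, hiso1⟩ := h1
  obtain ⟨hsub2, S2', T2', hs2, ht2, hiso2⟩ := h2
  obtain ⟨_, _, hdS⟩ := phylo_node' hS
  obtain ⟨_, _, hdT⟩ := phylo_node' hT
  have hY1S : Y1 ⊆ S1.leaves := hsub1.trans Finset.inter_subset_left
  have hY1T : Y1 ⊆ T1.leaves := hsub1.trans Finset.inter_subset_right
  have hY2S : Y2 ⊆ S2.leaves := hsub2.trans Finset.inter_subset_left
  have hY2T : Y2 ⊆ T2.leaves := hsub2.trans Finset.inter_subset_right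
  have hrs1 : S1.restrict (Y1 ∪ Y2) = some S1' := by
    rw [restrict_union_right_irrel (fun x hx hxY => hdS hx (mem_leaves'.mp (hY2S hxY))), hs1]
  have hrs2 : S2.restrict (Y1 ∪ Y2) = some S2' := by
    rw [restrict_union_left_irrel (fun x hx hxY => hdS (mem_leaves'.mp (hY1S hxY)) hx), hs2]
  have hrt1 : T1.restrict (Y1 ∪ Y2) = some T1' := by
    rw [restrict_union_right_irrel (fun x hx hxY => hdT hx (mem_leaves'.mp (hY2T hxY))), ht1]
  have hrt2 : T2.restrict (Y1 ∪ Y2) = some T2' := by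
    rw [restrict_union_left_irrel (fun x hx hxY => hdT (mem_leaves'.mp (hY1T hxY)) hx), ht2]
  refine ⟨?_, node S1' S2', node T1' T2', ?_, ?_, Iso.node hiso1 hiso2⟩
  · intro y hy
    rw [Finset.mem_union] at hy
    rw [Finset.mem_inter]
    rcases hy with hy | hy
    · constructor
      · have := hY1S hy; rw [mem_leaves'] at this ⊢; simp [leafList, this]
      · have := hY1T hy; rw [mem_leaves'] at this ⊢; simp [leafList, this]
    · constructor
      · have := hY2S hy; rw [mem_leaves'] at this ⊢; simp [leafList, this]
      · have := hY2T hy; rw [mem_leaves'] at this ⊢; simp [leafList, this]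
  · rw [restrict_node, hrs1, hrs2]
  · rw [restrict_node, hrt1, hrt2]

lemma agree_union_swap {S1 S2 T1 T2 : PTree α} (hS : Phylo (node S1 S2))
    (hT : Phylo (node T1 T2)) {Y1 Y2 : Finset α}
    (h1 : Agree S1 T2 Y1) (h2 : Agree S2 T1 Y2) :
    Agree (node S1 S2) (node T1 T2) (Y1 ∪ Y2) := by
  obtain ⟨hsub1, S1', T2', hs1, ht2, hiso1⟩ := h1
  obtain ⟨hsub2, S2', T1', hs2, ht1, hiso2⟩ := h2
  obtain ⟨_, _, hdS⟩ := phylo_node' hS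
  obtain ⟨_, _, hdT⟩ := phylo_node' hT
  have hY1S : Y1 ⊆ S1.leaves := hsub1.trans Finset.inter_subset_left
  have hY1T : Y1 ⊆ T2.leaves := hsub1.trans Finset.inter_subset_right
  have hY2S : Y2 ⊆ S2.leaves := hsub2.trans Finset.inter_subset_left
  have hY2T : Y2 ⊆ T1.leaves := hsub2.trans Finset.inter_subset_right
  have hrs1 : S1.restrict (Y1 ∪ Y2) = some S1' := by
    rw [restrict_union_right_irrel (fun x hx hxY => hdS hx (mem_leaves'.mp (hY2S hxY))), hs1]
  have hrs2 : S2.restrict (Y1 ∪ Y2) = some S2' := by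
    rw [restrict_union_left_irrel (fun x hx hxY => hdS (mem_leaves'.mp (hY1S hxY)) hx), hs2]
  have hrt1 : T1.restrict (Y1 ∪ Y2) = some T1' := by
    rw [restrict_union_left_irrel (fun x hx hxY => hdT hx (mem_leaves'.mp (hY1T hxY))), ht1]
  have hrt2 : T2.restrict (Y1 ∪ Y2) = some T2' := by
    rw [restrict_union_right_irrel (fun x hx hxY => hdT (mem_leaves'.mp (hY2T hxY)) hx), ht2]
  refine ⟨?_, node S1' S2', node T1' T2', ?_, ?_, Iso.swap hiso1 hiso2⟩
  · intro y hy
    rw [Finset.mem_union] at hy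
    rw [Finset.mem_inter]
    rcases hy with hy | hy
    · constructor
      · have := hY1S hy; rw [mem_leaves'] at this ⊢; simp [leafList, this]
      · have := hY1T hy; rw [mem_leaves'] at this ⊢; simp [leafList, this]
    · constructor
      · have := hY2S hy; rw [mem_leaves'] at this ⊢; simp [leafList, this]
      · have := hY2T hy; rw [mem_leaves'] at this ⊢; simp [leafList, this]
  · rw [restrict_node, hrs1, hrs2]
  · rw [restrict_node, hrt1, hrt2]

lemma mast_add_le {S1 S2 T1 T2 : PTree α} (hS : Phylo (node S1 S2))
    (hT : Phylo (node T1 T2))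
    (hne1 : ∃ Y, Agree S1 T1 Y) (hne2 : ∃ Y, Agree S2 T2 Y) :
    mast S1 T1 + mast S2 T2 ≤ mast (node S1 S2) (node T1 T2) := by
  obtain ⟨Y1, hY1, hc1⟩ := exists_mast_witness hne1
  obtain ⟨Y2, hY2, hc2⟩ := exists_mast_witness hne2
  have hdisj : Disjoint Y1 Y2 :=
    (leaves_disjoint hS).mono (hY1.1.trans Finset.inter_subset_left)
      (hY2.1.trans Finset.inter_subset_left)
  have := card_le_mast (agree_union hS hT hY1 hY2)
  rwa [Finset.card_union_of_disjoint hdisj, hc1, hc2] at this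

lemma mast_add_le_swap {S1 S2 T1 T2 : PTree α} (hS : Phylo (node S1 S2))
    (hT : Phylo (node T1 T2))
    (hne1 : ∃ Y, Agree S1 T2 Y) (hne2 : ∃ Y, Agree S2 T1 Y) :
    mast S1 T2 + mast S2 T1 ≤ mast (node S1 S2) (node T1 T2) := by
  obtain ⟨Y1, hY1, hc1⟩ := exists_mast_witness hne1
  obtain ⟨Y2, hY2, hc2⟩ := exists_mast_witness hne2
  have hdisj : Disjoint Y1 Y2 :=
    (leaves_disjoint hS).mono (hY1.1.trans Finset.inter_subset_left)
      (hY2.1.trans Finset.inter_subset_left)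
  have := card_le_mast (agree_union_swap hS hT hY1 hY2)
  rwa [Finset.card_union_of_disjoint hdisj, hc1, hc2] at this

end PhyloMAST.PTree

end Aux
section Num

open PhyloMAST PTree

lemma mastF1 : (2:ℝ) ^ (-(5/44) : ℝ) ≤ 37/40 := by
  have h0 : (0:ℝ) ≤ (2:ℝ) ^ (-(5/44):ℝ) := Real.rpow_nonneg (by norm_num) _
  rw [← pow_le_pow_iff_left₀ h0 (by norm_num) (show (44:ℕ) ≠ 0 by norm_num)]
  rw [← Real.rpow_natCast ((2:ℝ) ^ (-(5/44):ℝ)) 44, ← Real.rpow_mul (by norm_num)]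
  have h1 : (-(5/44) : ℝ) * ((44:ℕ):ℝ) = ((-5 : ℤ) : ℝ) := by push_cast; ring
  rw [h1, Real.rpow_intCast]
  norm_num

lemma mastF2 : (2:ℝ) ^ (-(105/22) : ℝ) ≤ 3/80 := by
  have h0 : (0:ℝ) ≤ (2:ℝ) ^ (-(105/22):ℝ) := Real.rpow_nonneg (by norm_num) _
  rw [← pow_le_pow_iff_left₀ h0 (by norm_num) (show (22:ℕ) ≠ 0 by norm_num)]
  rw [← Real.rpow_natCast ((2:ℝ) ^ (-(105/22):ℝ)) 22, ← Real.rpow_mul (by norm_num)]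
  have h1 : (-(105/22) : ℝ) * ((22:ℕ):ℝ) = ((-105 : ℤ) : ℝ) := by push_cast; ring
  rw [h1, Real.rpow_intCast]
  norm_num

lemma mast_four_cases (R : ℝ) {a b c d s : ℝ} (hs : a + b + c + d = s) :
    R * s ≤ a + b ∨ R * s ≤ c + d ∨ R * s ≤ a + c ∨ R * s ≤ b + d ∨
      ((1 - R)/2 * s ≤ a ∧ (1 - R)/2 * s ≤ d) ∨
      ((1 - R)/2 * s ≤ b ∧ (1 - R)/2 * s ≤ c) := by
  by_contra h
  push_neg at h
  obtain ⟨h1, h2, h3, h4, h5, h6⟩ := h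
  rcases le_or_gt ((1 - R)/2 * s) a with haε | haε
  · have hdε := h5 haε
    have hbε : (1 - R)/2 * s ≤ b := by linarith
    exact absurd (h6 hbε) (by linarith)
  · have hbε : (1 - R)/2 * s ≤ b := by linarith
    exact absurd (h6 hbε) (by linarith)

lemma mast_rpow_split (E : ℝ) : (2:ℝ) ^ E = (2:ℝ) ^ (E - 1) + (2:ℝ) ^ (E - 1) := by
  rw [Real.rpow_sub (by norm_num : (0:ℝ) < 2), Real.rpow_one]
  ring

end Num
section Main

open PhyloMAST PTree

lemma mast_bound_easy {α : Type} [DecidableEq α] {S T : PTree α}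
    (hS : Phylo S) (hT : Phylo T)
    (h1 : (S.leaves ∩ T.leaves).card = 1) :
    (2:ℝ) ^ (0.22 * Real.logb 2 ((S.leaves ∩ T.leaves).card : ℝ) -
        0.025 * ((S.height : ℝ) + (T.height : ℝ))) ≤ (mast S T : ℝ) := by
  have hm : 1 ≤ mast S T := one_le_mast hS hT (by omega)
  have hh : (0:ℝ) ≤ (S.height : ℝ) + (T.height : ℝ) := by positivity
  have hle : (2:ℝ) ^ (0.22 * Real.logb 2 ((S.leaves ∩ T.leaves).card : ℝ) -
      0.025 * ((S.height : ℝ) + (T.height : ℝ))) ≤ 1 := by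
    apply Real.rpow_le_one_of_one_le_of_nonpos one_le_two
    rw [h1]
    norm_num
    linarith
  have : (1:ℝ) ≤ (mast S T : ℝ) := by exact_mod_cast hm
  linarith

set_option maxHeartbeats 2000000 in
lemma mast_main {α : Type} [DecidableEq α] :
    ∀ (n : ℕ) (S T : PTree α), Phylo S → Phylo T → Balanced S → Balanced T →
      S.height + T.height ≤ n → 0 < (S.leaves ∩ T.leaves).card →
      (2:ℝ) ^ (0.22 * Real.logb 2 ((S.leaves ∩ T.leaves).card : ℝ) -
          0.025 * ((S.height : ℝ) + (T.height : ℝ))) ≤ (mast S T : ℝ) := by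
  intro n
  induction n with
  | zero =>
    intro S T hS hT hbS hbT hht hpos
    have h1 : (S.leaves ∩ T.leaves).card = 1 := by
      have hcard : S.leaves.card ≤ 2 ^ S.height := by
        rw [card_leaves hS]; exact length_le_two_pow S
      have hS0 : S.height = 0 := by omega
      have : (S.leaves ∩ T.leaves).card ≤ S.leaves.card :=
        Finset.card_le_card Finset.inter_subset_left
      rw [hS0] at hcard
      omega
    exact mast_bound_easy hS hT h1
  | succ n ih =>
    intro S T hS hT hbS hbT hht hpos
    by_cases ht1 : (S.leaves ∩ T.leaves).card = 1
    · exact mast_bound_easy hS hT ht1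
    have ht2 : 2 ≤ (S.leaves ∩ T.leaves).card := by omega
    -- both trees are internal nodes
    rcases S with x | ⟨S1, S2⟩
    · exfalso
      have hx : (PTree.leaf x : PTree α).leaves.card = 1 := by
        simp [leaves, leafList]
      have : ((PTree.leaf x : PTree α).leaves ∩ T.leaves).card ≤
          (PTree.leaf x : PTree α).leaves.card :=
        Finset.card_le_card Finset.inter_subset_left
      omega
    rcases T with y | ⟨T1, T2⟩
    · exfalso
      have hy : (PTree.leaf y : PTree α).leaves.card = 1 := by
        simp [leaves, leafList]
      have : ((node S1 S2).leaves ∩ (PTree.leaf y : PTree α).leaves).card ≤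
          (PTree.leaf y : PTree α).leaves.card :=
        Finset.card_le_card Finset.inter_subset_right
      omega
    obtain ⟨hpS1, hpS2, _⟩ := phylo_node' hS
    obtain ⟨hpT1, hpT2, _⟩ := phylo_node' hT
    obtain ⟨hbS1, hbS2, hheqS, hH1⟩ := balanced_node hbS
    obtain ⟨hbT1, hbT2, hheqT, hH2⟩ := balanced_node hbT
    have hdA : Disjoint S1.leaves S2.leaves := leaves_disjoint hS
    have hdB : Disjoint T1.leaves T2.leaves := leaves_disjoint hT
    have hAun : (node S1 S2).leaves = S1.leaves ∪ S2.leaves := by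
      simp [leaves, leafList]
    have hBun : (node T1 T2).leaves = T1.leaves ∪ T2.leaves := by
      simp [leaves, leafList]
    -- the four overlap counts
    set t11 := (S1.leaves ∩ T1.leaves).card with ht11
    set t12 := (S1.leaves ∩ T2.leaves).card with ht12
    set t21 := (S2.leaves ∩ T1.leaves).card with ht21
    set t22 := (S2.leaves ∩ T2.leaves).card with ht22
    set tt := ((node S1 S2).leaves ∩ (node T1 T2).leaves).card with htt
    have d1 : Disjoint (S1.leaves ∩ T1.leaves) (S1.leaves ∩ T2.leaves) :=
      hdB.mono Finset.inter_subset_right Finset.inter_subset_right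
    have d2 : Disjoint (S1.leaves ∩ T1.leaves) (S2.leaves ∩ T1.leaves) :=
      hdA.mono Finset.inter_subset_left Finset.inter_subset_left
    have d3 : Disjoint (S1.leaves ∩ T1.leaves) (S2.leaves ∩ T2.leaves) :=
      hdA.mono Finset.inter_subset_left Finset.inter_subset_left
    have d4 : Disjoint (S1.leaves ∩ T2.leaves) (S2.leaves ∩ T1.leaves) :=
      hdA.mono Finset.inter_subset_left Finset.inter_subset_left
    have d5 : Disjoint (S1.leaves ∩ T2.leaves) (S2.leaves ∩ T2.leaves) :=
      hdA.mono Finset.inter_subset_left Finset.inter_subset_left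
    have d6 : Disjoint (S2.leaves ∩ T1.leaves) (S2.leaves ∩ T2.leaves) :=
      hdB.mono Finset.inter_subset_right Finset.inter_subset_right
    have hsum : tt = t11 + t12 + t21 + t22 := by
      rw [htt, hAun, hBun]
      have hdecomp : (S1.leaves ∪ S2.leaves) ∩ (T1.leaves ∪ T2.leaves) =
          ((S1.leaves ∩ T1.leaves ∪ S1.leaves ∩ T2.leaves) ∪ S2.leaves ∩ T1.leaves)
            ∪ S2.leaves ∩ T2.leaves := by
        ext z
        simp only [Finset.mem_inter, Finset.mem_union]
        tauto
      rw [hdecomp,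
        Finset.card_union_of_disjoint (by
          rw [Finset.disjoint_union_left, Finset.disjoint_union_left]
          exact ⟨⟨d3, d5⟩, d6⟩),
        Finset.card_union_of_disjoint (by
          rw [Finset.disjoint_union_left]
          exact ⟨d2, d4⟩),
        Finset.card_union_of_disjoint d1]
    have hrow1 : (S1.leaves ∩ (node T1 T2).leaves).card = t11 + t12 := by
      rw [hBun, Finset.inter_union_distrib_left, Finset.card_union_of_disjoint d1]
    have hrow2 : (S2.leaves ∩ (node T1 T2).leaves).card = t21 + t22 := by
      rw [hBun, Finset.inter_union_distrib_left, Finset.card_union_of_disjoint d6]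
    have hcol1 : ((node S1 S2).leaves ∩ T1.leaves).card = t11 + t21 := by
      rw [hAun, Finset.union_inter_distrib_right, Finset.card_union_of_disjoint d2]
    have hcol2 : ((node S1 S2).leaves ∩ T2.leaves).card = t12 + t22 := by
      rw [hAun, Finset.union_inter_distrib_right, Finset.card_union_of_disjoint d5]
    -- real set-up
    have httpos : (0:ℝ) < (tt:ℝ) := by exact_mod_cast hpos
    set R : ℝ := (2:ℝ) ^ (-(5/44) : ℝ) with hRdef
    have hRpos : 0 < R := Real.rpow_pos_of_pos (by norm_num) _
    have hR1 : R ≤ 37/40 := mastF1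
    set ε : ℝ := (1 - R)/2 with hεdef
    have hε : 3/80 ≤ ε := by rw [hεdef]; linarith
    have hεpos : 0 < ε := by linarith
    have hεlog : -(105/22 : ℝ) ≤ Real.logb 2 ε := by
      have h2 : Real.logb 2 ((2:ℝ) ^ (-(105/22):ℝ)) ≤ Real.logb 2 ε :=
        Real.logb_le_logb_of_le one_lt_two (Real.rpow_pos_of_pos (by norm_num) _)
          (le_trans mastF2 hε)
      rwa [Real.logb_rpow (by norm_num) (by norm_num)] at h2
    have hRlog : Real.logb 2 R = -(5/44 : ℝ) :=
      Real.logb_rpow (by norm_num) (by norm_num)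
    -- height bookkeeping
    have hH1R : (((node S1 S2).height : ℕ) : ℝ) = (S1.height : ℝ) + 1 := by
      rw [hH1]; push_cast; ring
    have hH2R : (((node T1 T2).height : ℕ) : ℝ) = (T1.height : ℝ) + 1 := by
      rw [hH2]; push_cast; ring
    have hS2h : ((S2.height : ℕ) : ℝ) = (S1.height : ℝ) := by rw [← hheqS]
    have hT2h : ((T2.height : ℕ) : ℝ) = (T1.height : ℝ) := by rw [← hheqT]
    -- real sum
    have hsumR : (t11:ℝ) + (t12:ℝ) + (t21:ℝ) + (t22:ℝ) = (tt:ℝ) := by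
      exact_mod_cast hsum.symm
    rcases mast_four_cases R hsumR with hc | hc | hc | hc | ⟨hc1, hc2⟩ | ⟨hc1, hc2⟩
    · have hrR : R * tt ≤ ((S1.leaves ∩ (node T1 T2).leaves).card : ℝ) := by
        rw [hrow1]; push_cast; linarith
      have hrpos : 0 < (S1.leaves ∩ (node T1 T2).leaves).card := by
        rcases Nat.eq_zero_or_pos ((S1.leaves ∩ (node T1 T2).leaves).card) with h0 | h
        · exfalso; rw [h0] at hrR; push_cast at hrR; nlinarith
        · exact h
      have hih := ih S1 (node T1 T2) hpS1 hT hbS1 hbT (by omega) hrpos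
      have hmono : mast S1 (node T1 T2) ≤ mast (node S1 S2) (node T1 T2) :=
        mast_le_of_agree_imp (fun Y h => agree_node_left hS h)
      have hlogr : Real.logb 2 (tt:ℝ) - 5/44 ≤
          Real.logb 2 ((S1.leaves ∩ (node T1 T2).leaves).card : ℝ) := by
        have h2 : Real.logb 2 (R * tt) ≤
            Real.logb 2 ((S1.leaves ∩ (node T1 T2).leaves).card : ℝ) :=
          Real.logb_le_logb_of_le one_lt_two (by positivity) hrR
        rw [Real.logb_mul (ne_of_gt hRpos) (ne_of_gt httpos), hRlog] at h2
        linarith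
      refine le_trans ?_ (le_trans hih (by exact_mod_cast hmono))
      apply (Real.rpow_le_rpow_left_iff one_lt_two).mpr
      linarith [hH1R, hH2R, hS2h, hT2h, hlogr]
    · have hrR : R * tt ≤ ((S2.leaves ∩ (node T1 T2).leaves).card : ℝ) := by
        rw [hrow2]; push_cast; linarith
      have hrpos : 0 < (S2.leaves ∩ (node T1 T2).leaves).card := by
        rcases Nat.eq_zero_or_pos ((S2.leaves ∩ (node T1 T2).leaves).card) with h0 | h
        · exfalso; rw [h0] at hrR; push_cast at hrR; nlinarith
        · exact h
      have hih := ih S2 (node T1 T2) hpS2 hT hbS2 hbT (by omega) hrpos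
      have hmono : mast S2 (node T1 T2) ≤ mast (node S1 S2) (node T1 T2) :=
        mast_le_of_agree_imp (fun Y h => agree_node_right hS h)
      have hlogr : Real.logb 2 (tt:ℝ) - 5/44 ≤
          Real.logb 2 ((S2.leaves ∩ (node T1 T2).leaves).card : ℝ) := by
        have h2 : Real.logb 2 (R * tt) ≤
            Real.logb 2 ((S2.leaves ∩ (node T1 T2).leaves).card : ℝ) :=
          Real.logb_le_logb_of_le one_lt_two (by positivity) hrR
        rw [Real.logb_mul (ne_of_gt hRpos) (ne_of_gt httpos), hRlog] at h2
        linarith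
      refine le_trans ?_ (le_trans hih (by exact_mod_cast hmono))
      apply (Real.rpow_le_rpow_left_iff one_lt_two).mpr
      linarith [hH1R, hH2R, hS2h, hT2h, hlogr]
    · have hrR : R * tt ≤ (((node S1 S2).leaves ∩ T1.leaves).card : ℝ) := by
        rw [hcol1]; push_cast; linarith
      have hrpos : 0 < ((node S1 S2).leaves ∩ T1.leaves).card := by
        rcases Nat.eq_zero_or_pos (((node S1 S2).leaves ∩ T1.leaves).card) with h0 | h
        · exfalso; rw [h0] at hrR; push_cast at hrR; nlinarith
        · exact h
      have hih := ih (node S1 S2) T1 hS hpT1 hbS hbT1 (by omega) hrpos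
      have hmono : mast (node S1 S2) T1 ≤ mast (node S1 S2) (node T1 T2) :=
        mast_le_of_agree_imp (fun Y h => agree_tnode_left hT h)
      have hlogr : Real.logb 2 (tt:ℝ) - 5/44 ≤
          Real.logb 2 (((node S1 S2).leaves ∩ T1.leaves).card : ℝ) := by
        have h2 : Real.logb 2 (R * tt) ≤
            Real.logb 2 (((node S1 S2).leaves ∩ T1.leaves).card : ℝ) :=
          Real.logb_le_logb_of_le one_lt_two (by positivity) hrR
        rw [Real.logb_mul (ne_of_gt hRpos) (ne_of_gt httpos), hRlog] at h2
        linarith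
      refine le_trans ?_ (le_trans hih (by exact_mod_cast hmono))
      apply (Real.rpow_le_rpow_left_iff one_lt_two).mpr
      linarith [hH1R, hH2R, hS2h, hT2h, hlogr]
    · have hrR : R * tt ≤ (((node S1 S2).leaves ∩ T2.leaves).card : ℝ) := by
        rw [hcol2]; push_cast; linarith
      have hrpos : 0 < ((node S1 S2).leaves ∩ T2.leaves).card := by
        rcases Nat.eq_zero_or_pos (((node S1 S2).leaves ∩ T2.leaves).card) with h0 | h
        · exfalso; rw [h0] at hrR; push_cast at hrR; nlinarith
        · exact h
      have hih := ih (node S1 S2) T2 hS hpT2 hbS hbT2 (by omega) hrpos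
      have hmono : mast (node S1 S2) T2 ≤ mast (node S1 S2) (node T1 T2) :=
        mast_le_of_agree_imp (fun Y h => agree_tnode_right hT h)
      have hlogr : Real.logb 2 (tt:ℝ) - 5/44 ≤
          Real.logb 2 (((node S1 S2).leaves ∩ T2.leaves).card : ℝ) := by
        have h2 : Real.logb 2 (R * tt) ≤
            Real.logb 2 (((node S1 S2).leaves ∩ T2.leaves).card : ℝ) :=
          Real.logb_le_logb_of_le one_lt_two (by positivity) hrR
        rw [Real.logb_mul (ne_of_gt hRpos) (ne_of_gt httpos), hRlog] at h2
        linarith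
      refine le_trans ?_ (le_trans hih (by exact_mod_cast hmono))
      apply (Real.rpow_le_rpow_left_iff one_lt_two).mpr
      linarith [hH1R, hH2R, hS2h, hT2h, hlogr]
    · have hεtt : 0 < ε * tt := by positivity
      have hpA : 0 < t11 := by
        rcases Nat.eq_zero_or_pos t11 with h0 | h
        · exfalso; rw [h0] at hc1; push_cast at hc1; nlinarith
        · exact h
      have hpB : 0 < t22 := by
        rcases Nat.eq_zero_or_pos t22 with h0 | h
        · exfalso; rw [h0] at hc2; push_cast at hc2; nlinarith
        · exact h
      have hih1 := ih S1 T1 hpS1 hpT1 hbS1 hbT1 (by omega) hpA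
      have hih2 := ih S2 T2 hpS2 hpT2 hbS2 hbT2 (by omega) hpB
      rw [← ht11] at hih1
      rw [← ht22] at hih2
      have hne1 : ∃ Y, Agree S1 T1 Y := by
        obtain ⟨z, hz⟩ := Finset.card_pos.mp hpA
        exact ⟨{z}, agree_singleton hpS1 hpT1 hz⟩
      have hne2 : ∃ Y, Agree S2 T2 Y := by
        obtain ⟨z, hz⟩ := Finset.card_pos.mp hpB
        exact ⟨{z}, agree_singleton hpS2 hpT2 hz⟩
      have hadd := mast_add_le hS hT hne1 hne2
      have hl1 : Real.logb 2 (tt:ℝ) - 105/22 ≤ Real.logb 2 (t11:ℝ) := by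
        have h2 : Real.logb 2 (ε * tt) ≤ Real.logb 2 (t11:ℝ) :=
          Real.logb_le_logb_of_le one_lt_two (by positivity) hc1
        rw [Real.logb_mul (ne_of_gt hεpos) (ne_of_gt httpos)] at h2
        linarith
      have hl2 : Real.logb 2 (tt:ℝ) - 105/22 ≤ Real.logb 2 (t22:ℝ) := by
        have h2 : Real.logb 2 (ε * tt) ≤ Real.logb 2 (t22:ℝ) :=
          Real.logb_le_logb_of_le one_lt_two (by positivity) hc2
        rw [Real.logb_mul (ne_of_gt hεpos) (ne_of_gt httpos)] at h2
        linarith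
      set E : ℝ := 0.22 * Real.logb 2 (tt:ℝ) -
        0.025 * ((((node S1 S2).height : ℕ):ℝ) + (((node T1 T2).height : ℕ):ℝ)) with hE
      have hr1 : (2:ℝ) ^ (E - 1) ≤ (mast S1 T1 : ℝ) := by
        refine le_trans ((Real.rpow_le_rpow_left_iff one_lt_two).mpr ?_) hih1
        rw [hE]
        linarith [hl1, hεlog, hH1R, hH2R, hS2h, hT2h]
      have hr2 : (2:ℝ) ^ (E - 1) ≤ (mast S2 T2 : ℝ) := by
        refine le_trans ((Real.rpow_le_rpow_left_iff one_lt_two).mpr ?_) hih2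
        rw [hE]
        linarith [hl2, hεlog, hH1R, hH2R, hS2h, hT2h]
      have hsplit : (2:ℝ) ^ E = (2:ℝ) ^ (E - 1) + (2:ℝ) ^ (E - 1) := mast_rpow_split E
      have haddR : (mast S1 T1 : ℝ) + (mast S2 T2 : ℝ) ≤
          (mast (node S1 S2) (node T1 T2) : ℝ) := by exact_mod_cast hadd
      calc (2:ℝ) ^ E = (2:ℝ) ^ (E - 1) + (2:ℝ) ^ (E - 1) := hsplit
        _ ≤ (mast S1 T1 : ℝ) + (mast S2 T2 : ℝ) := add_le_add hr1 hr2
        _ ≤ (mast (node S1 S2) (node T1 T2) : ℝ) := haddR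
    · have hεtt : 0 < ε * tt := by positivity
      have hpA : 0 < t12 := by
        rcases Nat.eq_zero_or_pos t12 with h0 | h
        · exfalso; rw [h0] at hc1; push_cast at hc1; nlinarith
        · exact h
      have hpB : 0 < t21 := by
        rcases Nat.eq_zero_or_pos t21 with h0 | h
        · exfalso; rw [h0] at hc2; push_cast at hc2; nlinarith
        · exact h
      have hih1 := ih S1 T2 hpS1 hpT2 hbS1 hbT2 (by omega) hpA
      have hih2 := ih S2 T1 hpS2 hpT1 hbS2 hbT1 (by omega) hpB
      rw [← ht12] at hih1
      rw [← ht21] at hih2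
      have hne1 : ∃ Y, Agree S1 T2 Y := by
        obtain ⟨z, hz⟩ := Finset.card_pos.mp hpA
        exact ⟨{z}, agree_singleton hpS1 hpT2 hz⟩
      have hne2 : ∃ Y, Agree S2 T1 Y := by
        obtain ⟨z, hz⟩ := Finset.card_pos.mp hpB
        exact ⟨{z}, agree_singleton hpS2 hpT1 hz⟩
      have hadd := mast_add_le_swap hS hT hne1 hne2
      have hl1 : Real.logb 2 (tt:ℝ) - 105/22 ≤ Real.logb 2 (t12:ℝ) := by
        have h2 : Real.logb 2 (ε * tt) ≤ Real.logb 2 (t12:ℝ) :=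
          Real.logb_le_logb_of_le one_lt_two (by positivity) hc1
        rw [Real.logb_mul (ne_of_gt hεpos) (ne_of_gt httpos)] at h2
        linarith
      have hl2 : Real.logb 2 (tt:ℝ) - 105/22 ≤ Real.logb 2 (t21:ℝ) := by
        have h2 : Real.logb 2 (ε * tt) ≤ Real.logb 2 (t21:ℝ) :=
          Real.logb_le_logb_of_le one_lt_two (by positivity) hc2
        rw [Real.logb_mul (ne_of_gt hεpos) (ne_of_gt httpos)] at h2
        linarith
      set E : ℝ := 0.22 * Real.logb 2 (tt:ℝ) -
        0.025 * ((((node S1 S2).height : ℕ):ℝ) + (((node T1 T2).height : ℕ):ℝ)) with hE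
      have hr1 : (2:ℝ) ^ (E - 1) ≤ (mast S1 T2 : ℝ) := by
        refine le_trans ((Real.rpow_le_rpow_left_iff one_lt_two).mpr ?_) hih1
        rw [hE]
        linarith [hl1, hεlog, hH1R, hH2R, hS2h, hT2h]
      have hr2 : (2:ℝ) ^ (E - 1) ≤ (mast S2 T1 : ℝ) := by
        refine le_trans ((Real.rpow_le_rpow_left_iff one_lt_two).mpr ?_) hih2
        rw [hE]
        linarith [hl2, hεlog, hH1R, hH2R, hS2h, hT2h]
      have hsplit : (2:ℝ) ^ E = (2:ℝ) ^ (E - 1) + (2:ℝ) ^ (E - 1) := mast_rpow_split E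
      have haddR : (mast S1 T2 : ℝ) + (mast S2 T1 : ℝ) ≤
          (mast (node S1 S2) (node T1 T2) : ℝ) := by exact_mod_cast hadd
      calc (2:ℝ) ^ E = (2:ℝ) ^ (E - 1) + (2:ℝ) ^ (E - 1) := hsplit
        _ ≤ (mast S1 T2 : ℝ) + (mast S2 T1 : ℝ) := add_le_add hr1 hr2
        _ ≤ (mast (node S1 S2) (node T1 T2) : ℝ) := haddR

end Main
open PhyloMAST PTree
/-- If `S` and `T` are balanced phylogenetic trees on
`2 ^ h₁` and `2 ^ h₂` leaves whose label sets overlap in exactly `t > 0`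
leaves, then `mast S T ≥ 2 ^ (0.22 log₂ t - 0.025 (h₁ + h₂))`. -/
theorem mast_ge_of_overlap {α : Type} [DecidableEq α]
    (h1 h2 t : ℕ) (ht : 0 < t) (S T : PTree α)
    (hS : Phylo S) (hT : Phylo T) (hbS : Balanced S) (hbT : Balanced T)
    (hScard : S.leaves.card = 2 ^ h1) (hTcard : T.leaves.card = 2 ^ h2)
    (hoverlap : (S.leaves ∩ T.leaves).card = t) :
    (2 : ℝ) ^ (0.22 * Real.logb 2 t - 0.025 * ((h1 : ℝ) + (h2 : ℝ)))
      ≤ (mast S T : ℝ) := by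
  have hlenS : S.leaves.card = S.leafList.length := card_leaves hS
  have hlenT : T.leaves.card = T.leafList.length := card_leaves hT
  have hhS : S.height = h1 := by
    apply Nat.pow_right_injective (le_refl 2)
    show 2 ^ S.height = 2 ^ h1
    rw [← hbS, ← hlenS, hScard]
  have hhT : T.height = h2 := by
    apply Nat.pow_right_injective (le_refl 2)
    show 2 ^ T.height = 2 ^ h2
    rw [← hbT, ← hlenT, hTcard]
  have hpos : 0 < (S.leaves ∩ T.leaves).card := by rw [hoverlap]; exact ht
  have h := mast_main (S.height + T.height) S T hS hT hbS hbT le_rfl hpos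
  rw [hoverlap, hhS, hhT] at h
  exact h
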